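/- Let δ > 0 and define the sector C_δ := {k ∈ ℂ : −δ Im(k) ≤ |Re(k)|}. Let B ≥ 0 be a compact self-adjoint operator on a Hilbert space and α ∈ ℝ. Then for every k ∈ e^{iα} C_δ with k ≠ 0, the operator I + (i e^{iα}/k) B is invertible and ‖(I + (i e^{iα}/k) B)^{-1}‖ ≤ √(1 + δ^{-2}). -/

import Mathlib

open Complex ContinuousLinearMap

lemma keysq (δ : ℝ) (hδ : 0 < δ) (a b t : ℝ) (ht : 0 ≤ t) (hsec : -δ * b ≤ |a|) :
    a ^ 2 + b ^ 2 ≤ (1 + δ⁻¹ ^ 2) * (a ^ 2 + (b + t) ^ 2) := by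
  rcases le_or_gt 0 b with hb | hb
  · have h1 : b ^ 2 ≤ (b + t) ^ 2 := by nlinarith
    nlinarith [sq_nonneg δ⁻¹, sq_nonneg a, sq_nonneg (b + t)]
  · have h2 : δ ^ 2 * b ^ 2 ≤ a ^ 2 := by
      have : δ * (-b) ≤ |a| := by linarith
      have h0 : 0 ≤ δ * -b := mul_nonneg hδ.le (by linarith)
      have := mul_le_mul this this h0 (abs_nonneg a)
      rw [abs_mul_abs_self] at this
      nlinarith
    have h3 : b ^ 2 ≤ δ⁻¹ ^ 2 * a ^ 2 := by
      have hδ2 : (0:ℝ) < δ ^ 2 := by positivity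
      rw [inv_pow, inv_mul_eq_div, le_div_iff₀ hδ2]
      linarith [h2]
    nlinarith [sq_nonneg (b + t), sq_nonneg δ⁻¹]

lemma scalar (δ : ℝ) (hδ : 0 < δ) (w : ℂ) (hw : w ≠ 0) (hsec : -δ * w.im ≤ |w.re|)
    (s t : ℝ) (hs : 0 ≤ s) (ht : 0 ≤ t) :
    s ≤ Real.sqrt (1 + δ⁻¹ ^ 2) * ‖↑s + Complex.I / w * ↑t‖ := by
  have hwpos : 0 < ‖w‖ := by simpa using hw
  have hrw : (↑s : ℂ) + Complex.I / w * ↑t = (↑s * w + Complex.I * ↑t) / w := by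
    field_simp
  rw [hrw, norm_div]
  set A := ‖↑s * w + Complex.I * ↑t‖ with hA
  have hsec' : -δ * (s * w.im) ≤ |s * w.re| := by
    rw [abs_mul, _root_.abs_of_nonneg hs]
    calc -δ * (s * w.im) = s * (-δ * w.im) := by ring
    _ ≤ s * |w.re| := by exact mul_le_mul_of_nonneg_left hsec hs
  have hkey : (s * ‖w‖) ^ 2 ≤ (1 + δ⁻¹ ^ 2) * A ^ 2 := by
    have h1 : (s * ‖w‖) ^ 2 = (s * w.re) ^ 2 + (s * w.im) ^ 2 := by
      rw [mul_pow, Complex.sq_norm, Complex.normSq_apply]; ring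
    have h2 : A ^ 2 = (s * w.re) ^ 2 + (s * w.im + t) ^ 2 := by
      rw [hA, Complex.sq_norm, Complex.normSq_apply]
      simp [Complex.add_re, Complex.add_im, Complex.mul_re, Complex.mul_im]
      ring
    rw [h1, h2]
    exact keysq δ hδ _ _ t ht hsec'
  have hMA : s * ‖w‖ ≤ Real.sqrt (1 + δ⁻¹ ^ 2) * A := by
    have := Real.sqrt_le_sqrt hkey
    rwa [Real.sqrt_sq (by positivity), Real.sqrt_mul (by positivity),
      Real.sqrt_sq (by positivity)] at this
  rw [mul_div_assoc', le_div_iff₀ hwpos]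
  linarith [hMA]

lemma opbound {H : Type*} [NormedAddCommGroup H] [InnerProductSpace ℂ H] [CompleteSpace H]
    (B : H →L[ℂ] H) (hB : B.IsPositive) (c : ℂ) (M : ℝ) (hM : 0 ≤ M)
    (hc : ∀ s t : ℝ, 0 ≤ s → 0 ≤ t → s ≤ M * ‖↑s + c * ↑t‖) (x : H) :
    ‖x‖ ≤ M * ‖(1 + c • B) x‖ := by
  set t : ℝ := RCLike.re (inner ℂ x (B x) : ℂ) with htdef
  have ht : 0 ≤ t := hB.re_inner_nonneg_right x
  have hreal : (inner ℂ x (B x) : ℂ) = (t : ℂ) := by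
    have hsymm := hB.1
    have h1 : (starRingEnd ℂ) (inner ℂ x (B x) : ℂ) = (inner ℂ x (B x) : ℂ) := by
      rw [inner_conj_symm]; exact hsymm x x
    exact ((Complex.conj_eq_iff_re.mp h1)).symm
  have hinner : (inner ℂ x ((1 + c • B) x) : ℂ) = ((‖x‖ ^ 2 : ℝ) : ℂ) + c * t := by
    simp only [ContinuousLinearMap.add_apply, ContinuousLinearMap.one_apply,
      ContinuousLinearMap.smul_apply, inner_add_right, inner_smul_right, hreal,
      inner_self_eq_norm_sq_to_K]
    push_cast
    ring_nf
    simp [Complex.ofReal_pow]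
    ring
  have hb := hc (‖x‖ ^ 2) t (by positivity) ht
  rw [← hinner] at hb
  have hcs : ‖(inner ℂ x ((1 + c • B) x) : ℂ)‖ ≤ ‖x‖ * ‖(1 + c • B) x‖ := by
    exact norm_inner_le_norm x _
  rcases eq_or_lt_of_le (norm_nonneg x) with h0 | h0
  · rw [← h0]; positivity
  · have : ‖x‖ ^ 2 ≤ M * (‖x‖ * ‖(1 + c • B) x‖) :=
      hb.trans (by exact mul_le_mul_of_nonneg_left hcs hM)
    have := this
    nlinarith [norm_nonneg ((1 + c • B) x)]

open Complex

/-- let `δ > 0`, `C_δ = {k : −δ Im k ≤ |Re k|}`, `B ≥ 0` compact self-adjoint,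
`α ∈ ℝ`. For every `k ∈ e^{iα} C_δ`, `k ≠ 0`, the operator `I + (i e^{iα}/k) B` is invertible
with `‖(I + (i e^{iα}/k) B)⁻¹‖ ≤ √(1 + δ⁻²)`. -/
theorem stmt4 {H : Type*} [NormedAddCommGroup H] [InnerProductSpace ℂ H] [CompleteSpace H]
    (δ : ℝ) (hδ : 0 < δ)
    (B : H →L[ℂ] H) (hBpos : B.IsPositive) (hBcomp : IsCompactOperator B)
    (α : ℝ) (k : ℂ) (hk : k ≠ 0)
    (hkSec : ∃ w : ℂ, k = Complex.exp (Complex.I * α) * w ∧ -δ * w.im ≤ |w.re|) :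
    ∃ Binv : H →L[ℂ] H,
      (1 + (Complex.I * Complex.exp (Complex.I * α) / k) • B) * Binv = 1 ∧
      Binv * (1 + (Complex.I * Complex.exp (Complex.I * α) / k) • B) = 1 ∧
      ‖Binv‖ ≤ Real.sqrt (1 + δ⁻¹ ^ 2) := by
  obtain ⟨w, hkw, hsec⟩ := hkSec
  have hexp : Complex.exp (Complex.I * α) ≠ 0 := Complex.exp_ne_zero _
  have hw : w ≠ 0 := by
    rintro rfl
    exact hk (by simp [hkw])
  set c := Complex.I * Complex.exp (Complex.I * α) / k with hcdef
  have hc : c = Complex.I / w := by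
    rw [hcdef, hkw]
    field_simp
  set M := Real.sqrt (1 + δ⁻¹ ^ 2) with hMdef
  have hM0 : 0 ≤ M := Real.sqrt_nonneg _
  have hcs : ∀ s t : ℝ, 0 ≤ s → 0 ≤ t → s ≤ M * ‖↑s + c * ↑t‖ := by
    intro s t hs ht
    rw [hc]
    exact scalar δ hδ w hw hsec s t hs ht
  have hcs' : ∀ s t : ℝ, 0 ≤ s → 0 ≤ t →
      s ≤ M * ‖↑s + (starRingEnd ℂ) c * ↑t‖ := by
    intro s t hs ht
    have habs : ‖↑s + (starRingEnd ℂ) c * ↑t‖ = ‖↑s + c * ↑t‖ := by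
      rw [show (↑s + (starRingEnd ℂ) c * ↑t : ℂ) = (starRingEnd ℂ) (↑s + c * ↑t) by
        simp [map_add, map_mul, Complex.conj_ofReal]]
      exact Complex.norm_conj _
    rw [habs]
    exact hcs s t hs ht
  set T := 1 + c • B with hTdef
  have h1 : ∀ x, ‖x‖ ≤ M * ‖T x‖ := opbound B hBpos c M hM0 hcs
  have hadj : ContinuousLinearMap.adjoint T = 1 + (starRingEnd ℂ) c • B := by
    rw [← ContinuousLinearMap.star_eq_adjoint, hTdef]
    rw [star_add, star_smul, star_one, hBpos.isSelfAdjoint.star_eq]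
    rfl
  have h2 : ∀ x, ‖x‖ ≤ M * ‖ContinuousLinearMap.adjoint T x‖ := by
    rw [hadj]
    exact opbound B hBpos _ M hM0 hcs'
  have hanti : AntilipschitzWith ⟨M, hM0⟩ T :=
    T.antilipschitz_of_bound (by exact h1)
  have hker : LinearMap.ker (T : H →ₗ[ℂ] H) = ⊥ := LinearMap.ker_eq_bot_of_injective hanti.injective
  have hclosed : IsClosed ((LinearMap.range (T : H →ₗ[ℂ] H) : Submodule ℂ H) : Set H) := by
    rw [LinearMap.coe_range]
    exact hanti.isClosed_range T.uniformContinuous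
  have horth : (LinearMap.range (T : H →ₗ[ℂ] H) : Submodule ℂ H)ᗮ = ⊥ := by
    rw [Submodule.eq_bot_iff]
    intro x hx
    have hz : ∀ y, (inner ℂ (T y) x : ℂ) = 0 := fun y =>
      (Submodule.mem_orthogonal _ x).mp hx _ (LinearMap.mem_range_self _ y)
    have hTx : ContinuousLinearMap.adjoint T x = 0 := by
      have h3 : (inner ℂ (ContinuousLinearMap.adjoint T x) (ContinuousLinearMap.adjoint T x) : ℂ)
          = 0 := by
        rw [ContinuousLinearMap.adjoint_inner_right]
        exact hz _
      exact inner_self_eq_zero.mp h3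
    have := h2 x
    rw [hTx] at this
    simp at this
    exact norm_le_zero_iff.mp (by simpa using this)
  have hsurj : LinearMap.range (T : H →ₗ[ℂ] H) = ⊤ := by
    haveI : CompleteSpace (LinearMap.range (T : H →ₗ[ℂ] H) : Submodule ℂ H) := hclosed.completeSpace_coe
    exact Submodule.orthogonal_eq_bot_iff.mp horth
  set e := ContinuousLinearEquiv.ofBijective T hker hsurj with hedef
  have heT : ∀ y, T ((e.symm : H →L[ℂ] H) y) = y := fun y =>
    ContinuousLinearEquiv.ofBijective_apply_symm_apply T hker hsurj y
  refine ⟨(e.symm : H →L[ℂ] H), ?_, ?_, ?_⟩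
  · ext x
    exact heT x
  · ext x
    exact ContinuousLinearEquiv.ofBijective_symm_apply_apply T hker hsurj x
  · refine ContinuousLinearMap.opNorm_le_bound _ hM0 fun y => ?_
    calc ‖(e.symm : H →L[ℂ] H) y‖ ≤ M * ‖T ((e.symm : H →L[ℂ] H) y)‖ := h1 _
    _ = M * ‖y‖ := by rw [heT y]
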